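/- arXiv:2410.02092 — 6 statements merged into one kernel-verified Lean document; each statement's English description precedes it below -/
import Mathlib

section
/- Let m ≥ 2 and let A₁,…,A_m ∈ ℂ[x] be nonzero polynomials with n_j = deg A_j and n = n₁+⋯+n_m. Then the image of the generalized Sylvester map φ_{A₁,…,A_m} equals P_{n−1} ∩ (gcd(A₁,…,A_m)), the intersection of the space of polynomials of degree at most n−1 with the ideal of ℂ[x] generated by gcd(A₁,…,A_m). -/
open Polynomial


/-!
Statement 3 (Lemma `lem:ideal`): the image of the generalized Sylvester map
`φ_{A₁,…,A_m}(Q₁,…,Q_m) = Σ A_j Q_j`, with `Q_j` ranging over polynomials of degree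
`< n − n_j`, equals `P_{n−1} ∩ (gcd(A₁,…,A_m))`.
-/

lemma gcd_mem_span_image {ι : Type*} [DecidableEq ι] (f : ι → Polynomial ℂ) (s : Finset ι) :
    s.gcd f ∈ Ideal.span (f '' ↑s) := by
  induction s using Finset.induction_on with
  | empty => simp
  | @insert a s ha ih =>
    rw [Finset.gcd_insert]
    have h1 : GCDMonoid.gcd (f a) (s.gcd f) ∈ Ideal.span {f a, s.gcd f} := by
      have := Ideal.subset_span (Set.mem_singleton (GCDMonoid.gcd (f a) (s.gcd f)))
      rwa [span_gcd] at this
    refine Ideal.span_le.mpr ?_ h1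
    rw [Set.insert_subset_iff, Set.singleton_subset_iff]
    constructor
    · exact Ideal.subset_span ⟨a, by simp, rfl⟩
    · exact Ideal.span_mono (Set.image_mono (by exact_mod_cast Finset.subset_insert a s)) ih

/-- The generalized Sylvester map `(Q₁,…,Q_m) ↦ Σ_j A_j Q_j`, where `Q_j` ranges over the
space of polynomials of degree `< d j` (i.e. of degree at most `d j − 1`). -/
noncomputable def sylvesterMap (m : ℕ) (A : Fin m → Polynomial ℂ) (d : Fin m → ℕ) :
    (Π j : Fin m, ↥(Polynomial.degreeLT ℂ (d j))) →ₗ[ℂ] Polynomial ℂ where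
  toFun Q := ∑ j, A j * (Q j : Polynomial ℂ)
  map_add' Q R := by
    simp only [Pi.add_apply, Submodule.coe_add, mul_add, Finset.sum_add_distrib]
  map_smul' c Q := by
    simp only [Pi.smul_apply, SetLike.val_smul, mul_smul_comm, RingHom.id_apply,
      Finset.smul_sum]

theorem statement3 (m : ℕ) (hm : 2 ≤ m) (A : Fin m → Polynomial ℂ)
    (hA : ∀ j, A j ≠ 0) (n : ℕ) (hn : n = ∑ j, (A j).natDegree) :
    (LinearMap.range (sylvesterMap m A (fun j => n - (A j).natDegree)) : Set (Polynomial ℂ))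
      = (Polynomial.degreeLT ℂ n : Set (Polynomial ℂ)) ∩
        (Ideal.span {Finset.univ.gcd A} : Set (Polynomial ℂ)) := by
  classical
  have hnj : ∀ j, (A j).natDegree ≤ n := by
    intro j; rw [hn]
    exact Finset.single_le_sum (f := fun i => (A i).natDegree) (fun i _ => Nat.zero_le _)
      (Finset.mem_univ j)
  have hpair : ∀ i j : Fin m, i ≠ j → (A i).natDegree + (A j).natDegree ≤ n := by
    intro i j hij
    rw [hn]
    calc (A i).natDegree + (A j).natDegree
        = ∑ k ∈ ({i, j} : Finset (Fin m)), (A k).natDegree := (Finset.sum_pair (f := fun k => (A k).natDegree) hij).symm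
      _ ≤ _ := Finset.sum_le_sum_of_subset (Finset.subset_univ _)
  ext P
  simp only [Set.mem_inter_iff, SetLike.mem_coe, LinearMap.mem_range]
  constructor
  · rintro ⟨Q, rfl⟩
    have happ : sylvesterMap m A (fun j => n - (A j).natDegree) Q
        = ∑ j, A j * (Q j : Polynomial ℂ) := rfl
    rw [happ]
    constructor
    · rw [Polynomial.mem_degreeLT]
      refine lt_of_le_of_lt (Polynomial.degree_sum_le _ _) ?_
      refine (Finset.sup_lt_iff (WithBot.bot_lt_coe n)).2 fun j _ => ?_
      refine lt_of_le_of_lt (degree_mul_le _ _) ?_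
      have hdj : degree ((Q j : Polynomial ℂ)) < ((n - (A j).natDegree : ℕ) : WithBot ℕ) :=
        Polynomial.mem_degreeLT.1 (Q j).2
      calc degree (A j) + degree ((Q j : Polynomial ℂ))
          ≤ ((A j).natDegree : WithBot ℕ) + degree ((Q j : Polynomial ℂ)) := by
            rw [degree_eq_natDegree (hA j)]
        _ < ((A j).natDegree : WithBot ℕ) + ((n - (A j).natDegree : ℕ) : WithBot ℕ) :=
            WithBot.add_lt_add_left (by simp) hdj
        _ = ((n : ℕ) : WithBot ℕ) := by
            rw [← Nat.cast_add, Nat.add_sub_cancel' (hnj j)]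
    · rw [Ideal.mem_span_singleton]
      exact Finset.dvd_sum fun j _ => (Finset.gcd_dvd (Finset.mem_univ j)).mul_right _
  · rintro ⟨hdeg, hspan⟩
    rw [Ideal.mem_span_singleton] at hspan
    obtain ⟨c, hc⟩ := hspan
    have hgcd : Finset.univ.gcd A ∈ Submodule.span (Polynomial ℂ) (Set.range A) := by
      have := gcd_mem_span_image A Finset.univ
      rwa [Finset.coe_univ, Set.image_univ] at this
    obtain ⟨B, hB⟩ := (Submodule.mem_span_range_iff_exists_fun _).1 hgcd
    set i0 : Fin m := ⟨0, by omega⟩ with hi0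
    set g := Finset.univ.gcd A with hg
    -- raw solution
    have hraw : ∑ j, A j * (B j * c) = P := by
      rw [hc, ← hB, Finset.sum_mul]
      exact Finset.sum_congr rfl fun j _ => by ring_nf
    set R : Fin m → Polynomial ℂ := fun j => (B j * c) % A i0 with hR
    set D : Fin m → Polynomial ℂ := fun j => (B j * c) / A i0 with hD
    set Qf : Fin m → Polynomial ℂ :=
      fun j => if j = i0 then B i0 * c + ∑ k ∈ Finset.univ.erase i0, A k * D k else R j with hQf
    have hsum : ∑ j, A j * Qf j = P := by
      rw [← Finset.add_sum_erase _ _ (Finset.mem_univ i0)]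
      have h1 : Qf i0 = B i0 * c + ∑ k ∈ Finset.univ.erase i0, A k * D k := by simp [hQf]
      rw [h1, mul_add, Finset.mul_sum, add_assoc, ← Finset.sum_add_distrib]
      rw [← hraw, ← Finset.add_sum_erase _ _ (Finset.mem_univ i0)]
      congr 1
      refine Finset.sum_congr rfl fun j hj => ?_
      have hji : j ≠ i0 := (Finset.mem_erase.1 hj).1
      have h2 : Qf j = R j := by simp [hQf, hji]
      rw [h2]
      have := EuclideanDomain.div_add_mod (B j * c) (A i0)
      calc A i0 * (A j * D j) + A j * R j = A j * (A i0 * D j + R j) := by ring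
        _ = A j * (B j * c) := by rw [this]
    have hRdeg : ∀ j, j ≠ i0 → degree (R j) < ((A i0).natDegree : WithBot ℕ) := by
      intro j _
      have h : degree ((B j * c) % A i0) < degree (A i0) := EuclideanDomain.mod_lt _ (hA i0)
      rwa [degree_eq_natDegree (hA i0)] at h
    -- membership for j ≠ i0
    have hmemR : ∀ j, j ≠ i0 → Qf j ∈ Polynomial.degreeLT ℂ (n - (A j).natDegree) := by
      intro j hj
      rw [Polynomial.mem_degreeLT]
      have h2 : Qf j = R j := by simp [hQf, hj]
      rw [h2]
      refine lt_of_lt_of_le (hRdeg j hj) ?_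
      exact_mod_cast Nat.cast_le.2 (Nat.le_sub_of_add_le (hpair i0 j (Ne.symm hj)))
    -- each A j * Qf j for j ≠ i0 lies in degreeLT n
    have hterm : ∀ j, j ≠ i0 → A j * Qf j ∈ Polynomial.degreeLT ℂ n := by
      intro j hj
      rw [Polynomial.mem_degreeLT]
      refine lt_of_le_of_lt (degree_mul_le _ _) ?_
      have h2 : Qf j = R j := by simp [hQf, hj]
      rw [h2]
      calc degree (A j) + degree (R j)
          ≤ ((A j).natDegree : WithBot ℕ) + degree (R j) := by rw [degree_eq_natDegree (hA j)]
        _ < ((A j).natDegree : WithBot ℕ) + ((A i0).natDegree : WithBot ℕ) :=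
            WithBot.add_lt_add_left (by simp) (hRdeg j hj)
        _ ≤ ((n : ℕ) : WithBot ℕ) := by
            exact_mod_cast Nat.cast_le.2 (hpair j i0 hj)
    have hmem0 : Qf i0 ∈ Polynomial.degreeLT ℂ (n - (A i0).natDegree) := by
      have hA0Q : A i0 * Qf i0 ∈ Polynomial.degreeLT ℂ n := by
        have : A i0 * Qf i0 = P - ∑ j ∈ Finset.univ.erase i0, A j * Qf j := by
          rw [← hsum, ← Finset.add_sum_erase _ _ (Finset.mem_univ i0)]; ring
        rw [this]
        refine Submodule.sub_mem _ hdeg (Submodule.sum_mem _ fun j hj => ?_)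
        exact hterm j (Finset.mem_erase.1 hj).1
      rw [Polynomial.mem_degreeLT] at hA0Q ⊢
      by_cases hQ0 : Qf i0 = 0
      · rw [hQ0, degree_zero]; exact WithBot.bot_lt_coe _
      · rw [degree_mul, degree_eq_natDegree (hA i0), degree_eq_natDegree hQ0,
          ← Nat.cast_add, Nat.cast_lt] at hA0Q
        rw [degree_eq_natDegree hQ0, Nat.cast_lt]
        omega
    refine ⟨fun j => ⟨Qf j, ?_⟩, hsum⟩
    by_cases hj : j = i0
    · subst hj; exact hmem0
    · exact hmemR j hj
end

section
/- Let m ≥ 2 and let A₁,…,A_m ∈ ℂ[x] be nonzero polynomials with n_j = deg A_j and n = n₁+⋯+n_m. Then the rank of the generalized Sylvester map φ_{A₁,…,A_m} (the dimension of its image) equals n − deg gcd(A₁,…,A_m). -/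
open Polynomial in
lemma gcd_mem_span_aux {ι : Type*} [DecidableEq ι] (s : Finset ι) (A : ι → Polynomial ℂ) :
    s.gcd A ∈ Ideal.span (A '' s) := by
  induction s using Finset.induction with
  | empty => simp [Finset.gcd_empty]
  | @insert a s hnot ih =>
    rw [Finset.gcd_insert, Finset.coe_insert]
    have h1 : Ideal.span {A a, s.gcd A} ≤ Ideal.span (A '' insert a ↑s) := by
      rw [Ideal.span_le]
      rintro x hx
      rcases Set.mem_insert_iff.mp hx with rfl | hx
      · exact Ideal.subset_span ⟨a, Set.mem_insert a ↑s, rfl⟩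
      · rw [Set.mem_singleton_iff] at hx
        subst hx
        exact Ideal.span_mono (Set.image_mono (Set.subset_insert a ↑s)) ih
    have h2 : gcd (A a) (s.gcd A) ∈ Ideal.span {A a, s.gcd A} := by
      rw [← span_gcd]
      exact Ideal.subset_span rfl
    exact h1 h2

theorem statement4 (m : ℕ) (hm : 2 ≤ m) (A : Fin m → Polynomial ℂ)
    (hA : ∀ j, A j ≠ 0) (n : ℕ) (hn : n = ∑ j, (A j).natDegree) :
    Module.finrank ℂ
        ↥(LinearMap.range (sylvesterMap m A (fun j => n - (A j).natDegree)))
      = n - (Finset.univ.gcd A).natDegree := by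
  classical
  have hm0 : 0 < m := lt_of_lt_of_le (by norm_num) hm
  set g : Polynomial ℂ := Finset.univ.gcd A with hgdef
  have hg0 : g ≠ 0 := by
    intro h
    exact hA ⟨0, hm0⟩ (Finset.gcd_eq_zero_iff.mp h _ (Finset.mem_univ _))
  have hnj : ∀ j, (A j).natDegree ≤ n := by
    intro j
    rw [hn]
    exact Finset.single_le_sum (f := fun j => (A j).natDegree) (fun _ _ => Nat.zero_le _)
      (Finset.mem_univ j)
  have hgdvd : ∀ j, g ∣ A j := fun j => Finset.gcd_dvd (Finset.mem_univ j)
  have hgn : g.natDegree ≤ n :=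
    le_trans (Polynomial.natDegree_le_of_dvd (hgdvd ⟨0, hm0⟩) (hA _)) (hnj _)
  set k : ℕ := n - g.natDegree with hkdef
  set L : Polynomial ℂ →ₗ[ℂ] Polynomial ℂ := LinearMap.mulLeft ℂ g with hLdef
  have hLinj : Function.Injective L := fun x y hxy => by
    simpa [hLdef, LinearMap.mulLeft_apply] using
      mul_left_cancel₀ hg0 (by simpa [hLdef] using hxy)
  -- each term A j * Q j has degree < n
  have hterm : ∀ (j : Fin m) (q : Polynomial ℂ),
      q.degree < ((n - (A j).natDegree : ℕ) : WithBot ℕ) → (A j * q).degree < (n : WithBot ℕ) := by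
    intro j q hq
    rcases eq_or_ne q 0 with rfl | hq0
    · rw [mul_zero, Polynomial.degree_zero]; exact WithBot.bot_lt_coe n
    · have h1 : q.natDegree < n - (A j).natDegree :=
        (Polynomial.natDegree_lt_iff_degree_lt hq0).mpr hq
      have h2 : (A j * q).natDegree < n := by
        rw [Polynomial.natDegree_mul (hA j) hq0]
        omega
      exact (Polynomial.natDegree_lt_iff_degree_lt (mul_ne_zero (hA j) hq0)).mp h2
  have hrange : LinearMap.range (sylvesterMap m A (fun j => n - (A j).natDegree))
      = (Polynomial.degreeLT ℂ k).map L := by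
    apply le_antisymm
    · rintro p ⟨Q, rfl⟩
      have hp : (∑ j, A j * (Q j : Polynomial ℂ)) ∈ Polynomial.degreeLT ℂ n :=
        Submodule.sum_mem _ fun j _ => Polynomial.mem_degreeLT.mpr
          (hterm j _ (Polynomial.mem_degreeLT.mp (Q j).2))
      have hdvd : g ∣ ∑ j, A j * (Q j : Polynomial ℂ) :=
        Finset.dvd_sum fun j _ => Dvd.dvd.mul_right (hgdvd j) _
      obtain ⟨h, hh⟩ := hdvd
      refine Submodule.mem_map.mpr ⟨h, ?_, by simp [hLdef, LinearMap.mulLeft_apply, hh.symm, sylvesterMap]⟩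
      rw [Polynomial.mem_degreeLT]
      rcases eq_or_ne h 0 with rfl | hh0
      · rw [Polynomial.degree_zero]; exact WithBot.bot_lt_coe k
      · have hsum : (g * h).degree < (n : WithBot ℕ) := by
          rw [← hh]; exact Polynomial.mem_degreeLT.mp hp
        have : (g * h).natDegree < n :=
          (Polynomial.natDegree_lt_iff_degree_lt (mul_ne_zero hg0 hh0)).mpr hsum
        rw [Polynomial.natDegree_mul hg0 hh0] at this
        exact (Polynomial.natDegree_lt_iff_degree_lt hh0).mp (by omega)
    · rintro p ⟨h, hh, rfl⟩
      simp only [SetLike.mem_coe] at hh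
      rw [Polynomial.mem_degreeLT] at hh
      -- g * h lies in the ideal spanned by the A j
      have hmem : g * h ∈ Ideal.span (Set.range A) := by
        have : g ∈ Ideal.span (Set.range A) := by
          have := gcd_mem_span_aux Finset.univ A
          rwa [Finset.coe_univ, Set.image_univ] at this
        exact Ideal.mul_mem_right h _ this
      obtain ⟨c, hc⟩ := Ideal.mem_span_range_iff_exists_fun.mp hmem
      -- the cofactor products
      set M : Fin m → Polynomial ℂ := fun j => ∏ i ∈ Finset.univ.erase j, A i with hMdef
      have hM0 : ∀ j, M j ≠ 0 := fun j => Finset.prod_ne_zero_iff.mpr fun i _ => hA i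
      have hAM : ∀ j, A j * M j = ∏ i, A i := fun j =>
        Finset.mul_prod_erase Finset.univ A (Finset.mem_univ j)
      have hMdeg : ∀ j, (M j).natDegree = n - (A j).natDegree := by
        intro j
        rw [hMdef]
        rw [Polynomial.natDegree_prod _ _ (fun i _ => hA i)]
        have h2 : (∑ i ∈ Finset.univ.erase j, (A i).natDegree) + (A j).natDegree
            = ∑ i, (A i).natDegree := Finset.sum_erase_add _ _ (Finset.mem_univ j)
        omega
      set r : Fin m → Polynomial ℂ := fun j => c j % M j with hrdef
      set q : Fin m → Polynomial ℂ := fun j => c j / M j with hqdef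
      have hrdeg : ∀ j, (r j).degree < ((n - (A j).natDegree : ℕ) : WithBot ℕ) := by
        intro j
        have h1 : (r j).degree < (M j).degree := EuclideanDomain.mod_lt _ (hM0 j)
        rwa [Polynomial.degree_eq_natDegree (hM0 j), hMdeg j] at h1
      -- Σ A_j c_j = Σ A_j r_j + (Σ q_j) * ∏ A_i
      have hkey : ∑ j, A j * c j = (∑ j, A j * r j) + (∑ j, q j) * ∏ i, A i := by
        rw [Finset.sum_mul, ← Finset.sum_add_distrib]
        apply Finset.sum_congr rfl
        intro j _
        have := EuclideanDomain.div_add_mod (c j) (M j)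
        calc A j * c j = A j * (M j * (c j / M j) + c j % M j) := by rw [this]
          _ = A j * (c j % M j) + (c j / M j) * (A j * M j) := by ring
          _ = A j * r j + q j * ∏ i, A i := by rw [hAM j, hrdef, hqdef]
      have hsum0 : ∑ j, q j = 0 := by
        by_contra hq0
        have hP0 : (∏ i, A i) ≠ 0 := Finset.prod_ne_zero_iff.mpr fun i _ => hA i
        have hPdeg : (∏ i, A i).natDegree = n := by
          rw [Polynomial.natDegree_prod _ _ (fun i _ => hA i), hn]
        have hbig : ((∑ j, q j) * ∏ i, A i).degree ≥ (n : WithBot ℕ) := by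
          rw [Polynomial.degree_mul, Polynomial.degree_eq_natDegree hP0, hPdeg,
            Polynomial.degree_eq_natDegree hq0]
          exact le_add_of_nonneg_left (by simp)
        have hgh : (g * h).degree < (n : WithBot ℕ) := by
          rcases eq_or_ne h 0 with rfl | hh0
          · rw [mul_zero, Polynomial.degree_zero]; exact WithBot.bot_lt_coe n
          · have h1 : h.natDegree < k := (Polynomial.natDegree_lt_iff_degree_lt hh0).mpr hh
            refine (Polynomial.natDegree_lt_iff_degree_lt (mul_ne_zero hg0 hh0)).mp ?_
            rw [Polynomial.natDegree_mul hg0 hh0]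
            omega
        have hsmall : ((∑ j, A j * r j) : Polynomial ℂ).degree < (n : WithBot ℕ) := by
          refine lt_of_le_of_lt (Polynomial.degree_sum_le _ _) ?_
          exact (Finset.sup_lt_iff (WithBot.bot_lt_coe n)).mpr
            fun j _ => hterm j _ (hrdeg j)
        have heq : (∑ j, q j) * ∏ i, A i = g * h - ∑ j, A j * r j := by
          have : ∑ j, A j * c j = g * h := by
            rw [← hc]; apply Finset.sum_congr rfl; intro j _; ring
          rw [← this, hkey]; ring
        have : ((∑ j, q j) * ∏ i, A i).degree < (n : WithBot ℕ) := by
          rw [heq]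
          exact lt_of_le_of_lt (Polynomial.degree_sub_le _ _) (max_lt hgh hsmall)
        exact absurd hbig (not_le_of_gt this)
      have hfinal : ∑ j, A j * r j = g * h := by
        have h1 : ∑ j, A j * c j = g * h := by
          rw [← hc]; apply Finset.sum_congr rfl; intro j _; ring
        rw [hkey, hsum0, zero_mul, add_zero] at h1
        exact h1
      refine ⟨fun j => ⟨r j, Polynomial.mem_degreeLT.mpr (hrdeg j)⟩, ?_⟩
      simp only [sylvesterMap, LinearMap.coe_mk, AddHom.coe_mk]
      rw [hfinal]
      simp [hLdef, LinearMap.mulLeft_apply]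
  rw [hrange]
  have e1 : (Polynomial.degreeLT ℂ k).map L ≃ₗ[ℂ] Polynomial.degreeLT ℂ k :=
    (Submodule.equivMapOfInjective L hLinj _).symm
  rw [LinearEquiv.finrank_eq e1, LinearEquiv.finrank_eq (Polynomial.degreeLTEquiv ℂ k)]
  simp [hkdef]
end

section
/- Let ℋ be a complex Hilbert space (more generally, a Banach space) and let π₁, π₂ be bounded linear operators on ℋ that are projections (π_j² = π_j) with ‖π₁ − π₂‖ < 1. Then the ranges of π₁ and π₂ are isomorphic as vector spaces; in particular π₁ and π₂ have the same (potentially infinite) rank. -/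
/-!
Statement 10 (Kato's Lemma I.4.10, infinite-dimensional version): two bounded projections
on a complex Banach space at distance `< 1` have linearly isomorphic ranges, hence the
same (possibly infinite) rank.
-/

theorem statement10 {H : Type} [NormedAddCommGroup H] [NormedSpace ℂ H] [CompleteSpace H]
    (π₁ π₂ : H →L[ℂ] H)
    (h₁ : π₁.comp π₁ = π₁) (h₂ : π₂.comp π₂ = π₂)
    (hlt : ‖π₁ - π₂‖ < 1) :
    Nonempty (↥(LinearMap.range (π₁ : H →ₗ[ℂ] H)) ≃ₗ[ℂ] ↥(LinearMap.range (π₂ : H →ₗ[ℂ] H))) ∧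
    Module.rank ℂ ↥(LinearMap.range (π₁ : H →ₗ[ℂ] H)) = Module.rank ℂ ↥(LinearMap.range (π₂ : H →ₗ[ℂ] H)) := by
  have h₁' : π₁ * π₁ = π₁ := h₁
  have h₂' : π₂ * π₂ = π₂ := h₂
  set A : H →L[ℂ] H := π₁ - π₂ with hA
  set U : H →L[ℂ] H := π₂ * π₁ + (1 - π₂) * (1 - π₁) with hU
  set V : H →L[ℂ] H := π₁ * π₂ + (1 - π₁) * (1 - π₂) with hV
  have hUV : U * V = 1 - A * A := by
    simp only [hU, hV, hA]
    noncomm_ring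
    simp only [← mul_assoc, h₁', h₂']
    abel
  have hVU : V * U = 1 - A * A := by
    simp only [hU, hV, hA]
    noncomm_ring
    simp only [← mul_assoc, h₁', h₂']
    abel
  have hnorm : ‖A * A‖ < 1 := by
    have := norm_mul_le A A
    nlinarith [norm_nonneg A]
  -- 1 - A*A is a unit
  let w : (H →L[ℂ] H)ˣ := Units.oneSub (A * A) hnorm
  have hw : (w : H →L[ℂ] H) = 1 - A * A := rfl
  -- U is a unit
  have hb : U * (V * (↑w⁻¹ : H →L[ℂ] H)) = 1 := by
    rw [← mul_assoc, hUV, ← hw, Units.mul_inv]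
  have hc : ((↑w⁻¹ : H →L[ℂ] H) * V) * U = 1 := by
    rw [mul_assoc, hVU, ← hw, Units.inv_mul]
  have hbc : (↑w⁻¹ : H →L[ℂ] H) * V = V * (↑w⁻¹ : H →L[ℂ] H) :=
    left_inv_eq_right_inv hc hb
  have hUunit : IsUnit U := ⟨⟨U, V * (↑w⁻¹ : H →L[ℂ] H), hb, by rw [← hbc]; exact hc⟩, rfl⟩
  -- intertwining relation
  have hcomm : U * π₁ = π₂ * U := by
    simp only [hU]
    noncomm_ring
    simp only [← mul_assoc, h₁', h₂']
    abel
  -- the continuous linear equiv corresponding to U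
  let e : H ≃L[ℂ] H := ContinuousLinearEquiv.unitsEquiv ℂ H hUunit.unit
  have he : ∀ x, e x = U x := fun x => by
    show (hUunit.unit : H →L[ℂ] H) x = U x
    rw [IsUnit.unit_spec]
  have hcomm' : ∀ x, U (π₁ x) = π₂ (U x) := fun x => by
    have := congrArg (fun T : H →L[ℂ] H => T x) hcomm
    simpa [ContinuousLinearMap.mul_apply] using this
  have hsurj : Function.Surjective U := fun y =>
    ⟨(V * (↑w⁻¹ : H →L[ℂ] H)) y, by
      have := congrArg (fun T : H →L[ℂ] H => T y) hb
      simpa [ContinuousLinearMap.mul_apply] using this⟩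
  -- image of range π₁ under e is range π₂
  have hmap : Submodule.map (e.toLinearEquiv : H →ₗ[ℂ] H) (LinearMap.range (π₁ : H →ₗ[ℂ] H))
      = LinearMap.range (π₂ : H →ₗ[ℂ] H) := by
    ext x
    simp only [Submodule.mem_map, LinearMap.mem_range]
    constructor
    · rintro ⟨y, ⟨z, rfl⟩, rfl⟩
      exact ⟨U z, by
        rw [show (e.toLinearEquiv : H →ₗ[ℂ] H) ((π₁ : H →ₗ[ℂ] H) z) = e (π₁ z) from rfl, he, hcomm']; rfl⟩
    · rintro ⟨z, rfl⟩
      obtain ⟨y, rfl⟩ := hsurj z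
      exact ⟨π₁ y, ⟨y, rfl⟩, by rw [show (e.toLinearEquiv : H →ₗ[ℂ] H) (π₁ y) = e (π₁ y) from rfl,
        he, hcomm', ContinuousLinearMap.coe_coe]⟩
  have iso : (↥(LinearMap.range (π₁ : H →ₗ[ℂ] H)) ≃ₗ[ℂ] ↥(LinearMap.range (π₂ : H →ₗ[ℂ] H))) :=
    (e.toLinearEquiv.submoduleMap (LinearMap.range (π₁ : H →ₗ[ℂ] H))).trans (LinearEquiv.ofEq _ _ hmap)
  exact ⟨⟨iso⟩, iso.rank_eq⟩
end

section
/- Let α ∈ ℂ and κ = (κ₁, κ₂, κ₃) ∈ ℝ³, and let M(κ) be the 3×3 complex matrix M(κ) = −2i · [[0, ακ₃, −ᾱκ₂], [−ᾱκ₃, 0, ακ₁], [ακ₂, −ᾱκ₁, 0]]. Then M(κ) is Hermitian and its characteristic polynomial is det(μ·I − M(κ)) = μ³ − 4|α|²‖κ‖²μ + 16·Im(α³)·κ₁κ₂κ₃, where ‖κ‖² = κ₁² + κ₂² + κ₃². -/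
/-!
Statement 16: the matrix `M(κ) = −2i [[0, ακ₃, −ᾱκ₂], [−ᾱκ₃, 0, ακ₁], [ακ₂, −ᾱκ₁, 0]]`
is Hermitian with characteristic polynomial
`μ³ − 4|α|²‖κ‖²μ + 16 Im(α³) κ₁κ₂κ₃`.
-/

theorem statement16 (α : ℂ) (κ₁ κ₂ κ₃ : ℝ)
    (M : Matrix (Fin 3) (Fin 3) ℂ)
    (hM : M = (-(2 * Complex.I)) •
      !![0, α * (κ₃ : ℂ), -(starRingEnd ℂ α) * (κ₂ : ℂ);
         -(starRingEnd ℂ α) * (κ₃ : ℂ), 0, α * (κ₁ : ℂ);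
         α * (κ₂ : ℂ), -(starRingEnd ℂ α) * (κ₁ : ℂ), 0]) :
    M.IsHermitian ∧
    ∀ μ : ℂ, (μ • (1 : Matrix (Fin 3) (Fin 3) ℂ) - M).det =
      μ ^ 3 - 4 * ((‖α‖ : ℝ) : ℂ) ^ 2 * ((κ₁ ^ 2 + κ₂ ^ 2 + κ₃ ^ 2 : ℝ) : ℂ) * μ
        + 16 * (((α ^ 3).im : ℝ) : ℂ) * (κ₁ : ℂ) * (κ₂ : ℂ) * (κ₃ : ℂ) := by
  subst hM
  constructor
  · unfold Matrix.IsHermitian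
    ext i j
    fin_cases i <;> fin_cases j <;>
      simp [Matrix.conjTranspose_apply]
  · intro μ
    have habs : ‖α‖ * ‖α‖ = α.re * α.re + α.im * α.im := by
      rw [← sq, Complex.sq_norm, Complex.normSq_apply]
    have him : (α ^ 3).im = 3 * α.re ^ 2 * α.im - α.im ^ 3 := by
      simp [pow_succ, Complex.mul_im, Complex.mul_re]; ring
    simp only [Matrix.det_fin_three, Matrix.smul_apply, Matrix.sub_apply, Matrix.one_apply,
      Matrix.cons_val', Matrix.cons_val_zero, Matrix.cons_val_one, Matrix.head_cons,
      Matrix.head_fin_const, Matrix.empty_val', Matrix.cons_val_fin_one, smul_eq_mul,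
      him]
    simp [Complex.ext_iff, Complex.mul_re, Complex.mul_im, pow_succ]
    constructor <;> rw [habs] <;> ring
end

section
/- Let Λ ⊂ ℝⁿ be a lattice with dual lattice Λ* and Brillouin zone B. Let K ∈ B and suppose K₁,…,K_m are m distinct nonzero elements of Λ* satisfying K·K_j = ½‖K_j‖² for j = 1,…,m (that is, K lies on the m bisecting hyperplanes {x : x·K_j = ½‖K_j‖²}). Then for each j = 1,…,m: (a) ‖K − K_j‖ = ‖K‖; (b) K − K_j ∈ B; and (c) K − K_j lies on m bisecting hyperplanes of dual lattice vectors, namely (K−K_j)·(−K_j) = ½‖−K_j‖² and (K−K_j)·(K_ℓ−K_j) = ½‖K_ℓ−K_j‖² for every ℓ ∈ {1,…,m} with ℓ ≠ j. In particular, the set {k ∈ K + Λ* : ‖k‖ = ‖K‖} has at least m+1 elements. -/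
/-!
Statement 17 (Proposition `prop:brillouinmult`): if `K` lies in the Brillouin zone on the
`m` bisecting hyperplanes of dual lattice vectors `K₁,…,K_m`, then each `K − K_j` has the
same norm as `K`, lies in the Brillouin zone, and lies on `m` bisecting hyperplanes; in
particular `{k ∈ K + Λ* : ‖k‖ = ‖K‖}` has at least `m + 1` elements.
-/

open scoped RealInnerProductSpace

/-- The Brillouin zone of the lattice whose dual lattice is spanned (over `ℤ`) by `kd`:
the set of points closer to the origin than to any other point of the dual lattice. -/
def brillouinZone {n : ℕ} (kd : Fin n → EuclideanSpace ℝ (Fin n)) :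
    Set (EuclideanSpace ℝ (Fin n)) :=
  {x | ∀ q ∈ (Submodule.span ℤ (Set.range kd) :
      Submodule ℤ (EuclideanSpace ℝ (Fin n))), ‖x‖ ≤ ‖x - q‖}

theorem statement17 (n m : ℕ)
    (b : Module.Basis (Fin n) ℝ (EuclideanSpace ℝ (Fin n)))
    (kd : Fin n → EuclideanSpace ℝ (Fin n))
    -- `kd` is the dual basis: `⟪kd i, b j⟫ = 2π δ_{ij}`
    (hdual : ∀ i j, ⟪kd i, b j⟫ = if i = j then 2 * Real.pi else 0)
    (K : EuclideanSpace ℝ (Fin n)) (hK : K ∈ brillouinZone kd)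
    -- `K₁, …, K_m` are distinct nonzero dual lattice vectors …
    (Kv : Fin m → EuclideanSpace ℝ (Fin n))
    (hKvmem : ∀ j, Kv j ∈ (Submodule.span ℤ (Set.range kd) :
      Submodule ℤ (EuclideanSpace ℝ (Fin n))))
    (hKvne : ∀ j, Kv j ≠ 0) (hKvinj : Function.Injective Kv)
    -- … whose bisecting hyperplanes contain `K`
    (hbis : ∀ j, ⟪K, Kv j⟫ = (1 / 2) * ‖Kv j‖ ^ 2) :
    -- (a)
    (∀ j, ‖K - Kv j‖ = ‖K‖) ∧
    -- (b)
    (∀ j, K - Kv j ∈ brillouinZone kd) ∧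
    -- (c)
    (∀ j, ⟪K - Kv j, -Kv j⟫ = (1 / 2) * ‖-Kv j‖ ^ 2 ∧
      ∀ ℓ, ℓ ≠ j → ⟪K - Kv j, Kv ℓ - Kv j⟫ = (1 / 2) * ‖Kv ℓ - Kv j‖ ^ 2) ∧
    -- `{k ∈ K + Λ* : ‖k‖ = ‖K‖}` has at least `m + 1` elements
    (((m + 1 : ℕ) : Cardinal) ≤ Cardinal.mk
      {k : EuclideanSpace ℝ (Fin n) |
        k - K ∈ (Submodule.span ℤ (Set.range kd) :
          Submodule ℤ (EuclideanSpace ℝ (Fin n))) ∧ ‖k‖ = ‖K‖}) := by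

  have ha : ∀ j, ‖K - Kv j‖ = ‖K‖ := by
    intro j
    have h2 : ‖K - Kv j‖ ^ 2 = ‖K‖ ^ 2 := by
      rw [norm_sub_sq_real, hbis j]; ring
    rw [← Real.sqrt_sq (norm_nonneg (K - Kv j)), ← Real.sqrt_sq (norm_nonneg K), h2]
  have hb : ∀ j, K - Kv j ∈ brillouinZone kd := by
    intro j q hq
    have h := hK (Kv j + q) (Submodule.add_mem _ (hKvmem j) hq)
    rw [ha j]
    calc ‖K‖ ≤ ‖K - (Kv j + q)‖ := h
      _ = ‖K - Kv j - q‖ := by rw [sub_add_eq_sub_sub]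
  have hc : ∀ j, ⟪K - Kv j, -Kv j⟫ = (1 / 2) * ‖-Kv j‖ ^ 2 ∧
      ∀ ℓ, ℓ ≠ j → ⟪K - Kv j, Kv ℓ - Kv j⟫ = (1 / 2) * ‖Kv ℓ - Kv j‖ ^ 2 := by
    intro j
    constructor
    · rw [inner_neg_right, inner_sub_left, hbis j, real_inner_self_eq_norm_sq, norm_neg]
      ring
    · intro ℓ _
      rw [inner_sub_left, inner_sub_right, inner_sub_right, hbis j, hbis ℓ,
        real_inner_self_eq_norm_sq, norm_sub_sq_real, real_inner_comm (Kv j) (Kv ℓ)]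
      ring
  refine ⟨ha, hb, hc, ?_⟩
  set S := {k : EuclideanSpace ℝ (Fin n) |
        k - K ∈ (Submodule.span ℤ (Set.range kd) :
          Submodule ℤ (EuclideanSpace ℝ (Fin n))) ∧ ‖k‖ = ‖K‖}
  have hKS : K ∈ S := ⟨by simp, rfl⟩
  have hKjS : ∀ j, K - Kv j ∈ S := fun j =>
    ⟨by simpa using Submodule.neg_mem _ (hKvmem j), ha j⟩
  let f : Fin (m + 1) → S := fun i =>
    Fin.cases ⟨K, hKS⟩ (fun j => ⟨K - Kv j, hKjS j⟩) i
  have hf : Function.Injective f := by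
    intro i i' h
    induction i using Fin.cases <;> induction i' using Fin.cases
    · rfl
    · next j =>
      exfalso
      have : K - Kv j = K := (congrArg Subtype.val h).symm
      exact hKvne j (sub_eq_self.mp this)
    · next j =>
      exfalso
      have : K - Kv j = K := congrArg Subtype.val h
      exact hKvne j (sub_eq_self.mp this)
    · next j j' =>
      have : K - Kv j = K - Kv j' := congrArg Subtype.val h
      have : Kv j = Kv j' := sub_right_inj.mp this
      exact congrArg Fin.succ (hKvinj this)
  calc ((m + 1 : ℕ) : Cardinal) = Cardinal.mk (Fin (m + 1)) := by simp
    _ ≤ Cardinal.mk S := Cardinal.mk_le_of_injective hf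
end

section
/- Let Λ ⊂ ℝⁿ be a lattice with dual lattice Λ* and Brillouin zone B, and let V(B) denote the set of vertices of B, i.e. the extreme points of the convex set B. If K ∈ V(B), then {k ∈ K + Λ* : ‖k‖ = ‖K‖} = V(B) ∩ (K + Λ*); that is, a point of K + Λ* has the same norm as K if and only if it is a vertex of the Brillouin zone. -/
open scoped RealInnerProductSpace in
lemma norm_le_norm_sub_iff_aux18 {E : Type*} [NormedAddCommGroup E] [InnerProductSpace ℝ E]
    (x q : E) : ‖x‖ ≤ ‖x - q‖ ↔ 2 * ⟪x, q⟫ ≤ ‖q‖ ^ 2 := by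
  rw [← pow_le_pow_iff_left₀ (norm_nonneg x) (norm_nonneg _) two_ne_zero,
    norm_sub_sq_real]
  constructor <;> intro h <;> linarith

open scoped RealInnerProductSpace in
lemma norm_sub_eq_of_inner_aux18 {E : Type*} [NormedAddCommGroup E] [InnerProductSpace ℝ E]
    {x q : E} (h : 2 * ⟪x, q⟫ = ‖q‖ ^ 2) : ‖x - q‖ = ‖x‖ := by
  have h2 : ‖x - q‖ ^ 2 = ‖x‖ ^ 2 := by rw [norm_sub_sq_real]; linarith
  calc ‖x - q‖ = Real.sqrt (‖x - q‖ ^ 2) := (Real.sqrt_sq (norm_nonneg _)).symm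
    _ = Real.sqrt (‖x‖ ^ 2) := by rw [h2]
    _ = ‖x‖ := Real.sqrt_sq (norm_nonneg _)

open scoped RealInnerProductSpace in
theorem statement18 (n : ℕ)
    (b : Module.Basis (Fin n) ℝ (EuclideanSpace ℝ (Fin n)))
    (kd : Fin n → EuclideanSpace ℝ (Fin n))
    -- `kd` is the dual basis: `⟪kd i, b j⟫ = 2π δ_{ij}`
    (hdual : ∀ i j, ⟪kd i, b j⟫ = if i = j then 2 * Real.pi else 0)
    -- `K` is a vertex (extreme point) of the Brillouin zone
    (K : EuclideanSpace ℝ (Fin n))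
    (hK : K ∈ Set.extremePoints ℝ (brillouinZone kd)) :
    {k : EuclideanSpace ℝ (Fin n) |
        k - K ∈ (Submodule.span ℤ (Set.range kd) :
          Submodule ℤ (EuclideanSpace ℝ (Fin n))) ∧ ‖k‖ = ‖K‖}
      = Set.extremePoints ℝ (brillouinZone kd) ∩
        {k : EuclideanSpace ℝ (Fin n) |
          k - K ∈ (Submodule.span ℤ (Set.range kd) :
            Submodule ℤ (EuclideanSpace ℝ (Fin n)))} := by
  set S : Submodule ℤ (EuclideanSpace ℝ (Fin n)) := Submodule.span ℤ (Set.range kd) with hS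
  obtain ⟨hKB, hKext⟩ := hK
  ext k
  simp only [Set.mem_setOf_eq, Set.mem_inter_iff]
  constructor
  · rintro ⟨hq, hnorm⟩
    set q : EuclideanSpace ℝ (Fin n) := k - K with hqdef
    have hKq : k - q = K := by simp [hqdef]
    -- k is in the Brillouin zone
    have hkB : k ∈ brillouinZone kd := by
      intro q' hq'
      have h1 : ‖K‖ ≤ ‖K - (q' - q)‖ := hKB _ (S.sub_mem hq' hq)
      have h2 : K - (q' - q) = k - q' := by
        simp only [hqdef]; abel
      rw [h2] at h1
      exact hnorm ▸ h1
    -- the key equality 2⟪k,q⟫ = ‖q‖²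
    have hkq : 2 * ⟪k, q⟫ = ‖q‖ ^ 2 := by
      have hle : 2 * ⟪k, q⟫ ≤ ‖q‖ ^ 2 := (norm_le_norm_sub_iff_aux18 k q).mp (hkB q hq)
      have heq : ‖k - q‖ = ‖k‖ := by rw [hKq, ← hnorm]
      have := heq
      have h2 : ‖k - q‖ ^ 2 = ‖k‖ ^ 2 := by rw [heq]
      rw [norm_sub_sq_real] at h2
      linarith
    refine ⟨⟨hkB, ?_⟩, hq⟩
    rintro x hx y hy ⟨a, c, ha, hc, hac, hxy⟩
    have hxle : 2 * ⟪x, q⟫ ≤ ‖q‖ ^ 2 := (norm_le_norm_sub_iff_aux18 x q).mp (hx q hq)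
    have hyle : 2 * ⟪y, q⟫ ≤ ‖q‖ ^ 2 := (norm_le_norm_sub_iff_aux18 y q).mp (hy q hq)
    have hsum : a * ⟪x, q⟫ + c * ⟪y, q⟫ = ⟪k, q⟫ := by
      rw [← hxy, inner_add_left, real_inner_smul_left, real_inner_smul_left]
    -- both inner products attain the maximum
    have hxq : 2 * ⟪x, q⟫ = ‖q‖ ^ 2 := by nlinarith
    have hyq : 2 * ⟪y, q⟫ = ‖q‖ ^ 2 := by nlinarith
    -- translated points are in the Brillouin zone
    have hxB : x - q ∈ brillouinZone kd := by
      intro q' hq'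
      have h1 : ‖x‖ ≤ ‖x - (q + q')‖ := hx _ (S.add_mem hq hq')
      have h2 : x - (q + q') = (x - q) - q' := by abel
      rw [h2] at h1
      rw [norm_sub_eq_of_inner_aux18 hxq]
      exact h1
    have hyB : y - q ∈ brillouinZone kd := by
      intro q' hq'
      have h1 : ‖y‖ ≤ ‖y - (q + q')‖ := hy _ (S.add_mem hq hq')
      have h2 : y - (q + q') = (y - q) - q' := by abel
      rw [h2] at h1
      rw [norm_sub_eq_of_inner_aux18 hyq]
      exact h1
    have hseg : K ∈ openSegment ℝ (x - q) (y - q) := by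
      refine ⟨a, c, ha, hc, hac, ?_⟩
      have : a • (x - q) + c • (y - q) = (a • x + c • y) - (a + c) • q := by
        module
      rw [this, hac, one_smul, hxy, hKq]
    have hx' := hKext hxB hyB hseg
    have : x - q = k - q := by rw [hx', hKq]
    exact sub_left_injective this
  · rintro ⟨⟨hkB, _⟩, hq⟩
    refine ⟨hq, le_antisymm ?_ ?_⟩
    · have h1 := hkB _ hq
      simpa using h1
    · have h1 := hKB _ (S.neg_mem hq)
      have h2 : K - -(k - K) = k := by abel
      rw [h2] at h1
      exact h1
end
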